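/- For all nonnegative integers n, the sum over all integers j of (-1)^j * C(n, floor((n+5j)/2)) equals F_{n+1}, the (n+1)-st Fibonacci number, which in turn equals the sum over k from 0 to floor(n/2) of C(n-k, k). -/

import Mathlib

/-- Binomial coefficient `C(n,k)` with integer lower index, equal to `0` for `k < 0`
(and automatically `0` for `k > n`). -/
def intChoose (n : ℕ) (k : ℤ) : ℤ :=
  if 0 ≤ k then (n.choose k.toNat : ℤ) else 0

lemma intChoose_eq_zero_of_neg (n : ℕ) {k : ℤ} (h : k < 0) : intChoose n k = 0 :=
  if_neg (not_le.mpr h)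

lemma intChoose_eq_zero_of_gt (n : ℕ) {k : ℤ} (h : (n : ℤ) < k) : intChoose n k = 0 := by
  unfold intChoose
  rw [if_pos (by omega), Nat.choose_eq_zero_of_lt (by omega), Nat.cast_zero]

lemma intChoose_succ (n : ℕ) (k : ℤ) :
    intChoose (n + 1) k = intChoose n (k - 1) + intChoose n k := by
  unfold intChoose
  rcases lt_trichotomy k 0 with h | h | h
  · rw [if_neg (by omega), if_neg (by omega), if_neg (by omega)]; ring
  · subst h; norm_num
  · rw [if_pos (by omega), if_pos (by omega), if_pos (by omega)]
    have hk : k.toNat = (k - 1).toNat + 1 := by omega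
    rw [hk, Nat.choose_succ_succ]
    push_cast; ring

/-- The shifted alternating strip sum. -/
noncomputable def G (r : ℤ) (n : ℕ) : ℤ :=
  ∑ᶠ j : ℤ, (-1 : ℤ) ^ j.natAbs * intChoose n (((n : ℤ) + 5 * j + r) / 2)

lemma term_eq_zero (n : ℕ) (r j : ℤ)
    (h : j < -((n : ℤ) + r.natAbs + 1) ∨ (n : ℤ) + r.natAbs + 1 < j) :
    intChoose n (((n : ℤ) + 5 * j + r) / 2) = 0 := by
  rcases h with h | h
  · apply intChoose_eq_zero_of_neg
    apply Int.ediv_neg_of_neg_of_pos (by omega) (by norm_num)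
  · apply intChoose_eq_zero_of_gt
    have : (n : ℤ) + 1 ≤ ((n : ℤ) + 5 * j + r) / 2 := by
      rw [Int.le_ediv_iff_mul_le (by norm_num)]
      omega
    omega

lemma G_eq_sum (r : ℤ) (n : ℕ) {L U : ℤ} (hL : L ≤ -((n : ℤ) + r.natAbs + 1))
    (hU : (n : ℤ) + r.natAbs + 1 ≤ U) :
    G r n = ∑ j ∈ Finset.Icc L U,
      (-1 : ℤ) ^ j.natAbs * intChoose n (((n : ℤ) + 5 * j + r) / 2) := by
  apply finsum_eq_sum_of_support_subset
  intro j hj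
  simp only [Function.mem_support, ne_eq] at hj
  simp only [Finset.coe_Icc, Set.mem_Icc]
  by_contra hc
  rw [not_and_or] at hc
  apply hj
  rcases hc with hc | hc
  · rw [term_eq_zero n r j (Or.inl (by omega)), mul_zero]
  · rw [term_eq_zero n r j (Or.inr (by omega)), mul_zero]

lemma neg_one_pow_succ (i : ℤ) :
    (-1 : ℤ) ^ i.natAbs = -(-1 : ℤ) ^ (i + 1).natAbs := by
  rcases Int.even_or_odd i with h | h
  · rw [(Int.natAbs_even.mpr h).neg_one_pow]
    have : Odd (i + 1) := by rcases h with ⟨m, hm⟩; exact ⟨m, by omega⟩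
    rw [(Int.natAbs_odd.mpr this).neg_one_pow]; ring
  · rw [(Int.natAbs_odd.mpr h).neg_one_pow]
    have : Even (i + 1) := by rcases h with ⟨m, hm⟩; exact ⟨m + 1, by omega⟩
    rw [(Int.natAbs_even.mpr this).neg_one_pow]

/-- Shift: `G (r+5) n = - G r n`. -/
lemma G_add_five (r : ℤ) (n : ℕ) : G (r + 5) n = -G r n := by
  set B : ℤ := (n : ℤ) + r.natAbs + 7 with hB
  have h1 : G (r + 5) n = ∑ j ∈ Finset.Icc (-B - 1) (B - 1),
      (-1 : ℤ) ^ j.natAbs * intChoose n (((n : ℤ) + 5 * j + (r + 5)) / 2) :=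
    G_eq_sum _ _ (by omega) (by omega)
  have h2 : G r n = ∑ j ∈ Finset.Icc (-B - 1 + 1) (B - 1 + 1),
      (-1 : ℤ) ^ j.natAbs * intChoose n (((n : ℤ) + 5 * j + r) / 2) :=
    G_eq_sum _ _ (by omega) (by omega)
  rw [h1, h2, ← Finset.map_add_right_Icc (-B - 1) (B - 1) 1, Finset.sum_map,
    ← Finset.sum_neg_distrib]
  apply Finset.sum_congr rfl
  intro i _
  simp only [addRightEmbedding_apply]
  rw [show (n : ℤ) + 5 * (i + 1) + r = (n : ℤ) + 5 * i + (r + 5) by ring,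
    neg_one_pow_succ i]
  ring

/-- Pascal: `G r (n+1) = G (r-1) n + G (r+1) n`. -/
lemma G_succ (r : ℤ) (n : ℕ) : G r (n + 1) = G (r - 1) n + G (r + 1) n := by
  set B : ℤ := (n : ℤ) + r.natAbs + 3 with hB
  rw [G_eq_sum r (n + 1) (L := -B) (U := B) (by omega) (by omega),
    G_eq_sum (r - 1) n (L := -B) (U := B) (by omega) (by omega),
    G_eq_sum (r + 1) n (L := -B) (U := B) (by omega) (by omega),
    ← Finset.sum_add_distrib]
  apply Finset.sum_congr rfl
  intro j _
  push_cast
  rw [show ((n : ℤ) + 1) + 5 * j + r = ((n : ℤ) + 5 * j + (r - 1)) + 2 * 1 by ring,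
    intChoose_succ, Int.add_mul_ediv_left _ _ (by norm_num : (2:ℤ) ≠ 0)]
  rw [show ((n : ℤ) + 5 * j + (r - 1)) / 2 + 1 - 1 = ((n : ℤ) + 5 * j + (r - 1)) / 2 by ring]
  rw [show (n : ℤ) + 5 * j + (r - 1) = ((n : ℤ) + 5 * j + (r + 1)) + 2 * (-1) by ring,
    Int.add_mul_ediv_left _ _ (by norm_num : (2:ℤ) ≠ 0)]
  rw [show ((n : ℤ) + 5 * j + (r + 1)) / 2 + -1 + 1 = ((n : ℤ) + 5 * j + (r + 1)) / 2 by ring]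
  ring

lemma G_invariant (n : ℕ) :
    G 0 n = Nat.fib (n + 1) ∧ G 1 n = Nat.fib (n + 1) ∧ G 2 n = Nat.fib n ∧
      G 3 n = 0 ∧ G 4 n = -(Nat.fib n : ℤ) := by
  induction n with
  | zero =>
    refine ⟨?_, ?_, ?_, ?_, ?_⟩ <;>
    · rw [G_eq_sum _ 0 (L := -8) (U := 8) (by norm_num) (by norm_num)]
      decide
  | succ n ih =>
    obtain ⟨h0, h1, h2, h3, h4⟩ := ih
    have hm1 : G (-1) n = (Nat.fib n : ℤ) := by
      have h := G_add_five (-1) n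
      norm_num at h
      linarith
    have h5 : G 5 n = -(Nat.fib (n + 1) : ℤ) := by
      have h := G_add_five 0 n
      norm_num at h
      linarith
    refine ⟨?_, ?_, ?_, ?_, ?_⟩
    · rw [G_succ, show (0:ℤ) - 1 = -1 by norm_num, show (0:ℤ) + 1 = 1 by norm_num,
        hm1, h1, Nat.fib_add_two]
      push_cast; ring
    · rw [G_succ, show (1:ℤ) - 1 = 0 by norm_num, show (1:ℤ) + 1 = 2 by norm_num,
        h0, h2, Nat.fib_add_two]
      push_cast; ring
    · rw [G_succ, show (2:ℤ) - 1 = 1 by norm_num, show (2:ℤ) + 1 = 3 by norm_num,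
        h1, h3]
      ring
    · rw [G_succ, show (3:ℤ) - 1 = 2 by norm_num, show (3:ℤ) + 1 = 4 by norm_num,
        h2, h4]
      ring
    · rw [G_succ, show (4:ℤ) - 1 = 3 by norm_num, show (4:ℤ) + 1 = 5 by norm_num,
        h3, h5]
      ring

lemma fib_eq_sum_choose (n : ℕ) :
    Nat.fib (n + 1) = ∑ k ∈ Finset.range (n / 2 + 1), (n - k).choose k := by
  rw [Nat.fib_succ_eq_sum_choose, Finset.Nat.sum_antidiagonal_eq_sum_range_succ_mk]
  have h1 : ∑ k ∈ Finset.range (n + 1), k.choose (n - k)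
      = ∑ k ∈ Finset.range (n + 1), (n - k).choose k := by
    rw [← Finset.sum_range_reflect (fun k => (n - k).choose k) (n + 1)]
    apply Finset.sum_congr rfl
    intro j hj
    simp only [Finset.mem_range] at hj
    congr 1
    omega
  rw [h1]
  refine (Finset.sum_subset (Finset.range_subset_range.mpr (by omega)) ?_).symm
  intro k hk hk2
  simp only [Finset.mem_range] at hk hk2
  exact Nat.choose_eq_zero_of_lt (by omega)

/-- For all `n ≥ 0`, `∑_{j ∈ ℤ} (-1)^j C(n, ⌊(n+5j)/2⌋) = F_{n+1} = ∑_{k=0}^{⌊n/2⌋} C(n-k,k)`. -/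
theorem alternating_sum_mod5_strip_eq_fib (n : ℕ) :
    (∑ᶠ j : ℤ, (-1 : ℤ) ^ j.natAbs * intChoose n (((n : ℤ) + 5 * j) / 2)) =
        (Nat.fib (n + 1) : ℤ) ∧
      Nat.fib (n + 1) = ∑ k ∈ Finset.range (n / 2 + 1), (n - k).choose k := by
  constructor
  · have h := (G_invariant n).1
    rw [G] at h
    simpa using h
  · exact fib_eq_sum_choose n
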